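/- If x ∈ J is singular, then for all t ∈ H and all a, b ∈ N the element t·a·x·b·t⁻¹ is singular; consequently every element of the G̃-orbit of a singular element of J is singular, and every element of the G̃-orbit of a regular element of J is regular. -/
import Mathlib


/-- An element `x` (of the radical `J`) is *singular* if there is an idempotent `e ≠ 1`
of the algebra with `e * x = x * e = x`; otherwise it is *regular*. -/
def IsSingular {A : Type*} [Ring A] (x : A) : Prop :=
  ∃ e : A, IsIdempotentElem e ∧ e ≠ 1 ∧ e * x = x ∧ x * e = x

/-- `x, y ∈ J` lie in the same `G̃`-orbit: `y = t * a * x * b * t⁻¹` with `t ∈ H = S^×`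
(both `t` and `t⁻¹` lie in `S`) and `a, b ∈ N = 1 + J`. -/
def SameOrbitJ {F A : Type*} [Field F] [Ring A] [Algebra F A]
    (J : Ideal A) (S : Subalgebra F A) (x y : A) : Prop :=
  ∃ t : Aˣ, (t : A) ∈ S ∧ ((t⁻¹ : Aˣ) : A) ∈ S ∧
    ∃ a b : A, a - 1 ∈ J ∧ b - 1 ∈ J ∧
      y = (t : A) * a * x * b * ((t⁻¹ : Aˣ) : A)

section Aux

variable {A : Type*} [Ring A]

/-- An idempotent nilpotent element is zero. -/
lemma idem_nilpotent_eq_zero {a : A} (ha : IsIdempotentElem a) (hn : IsNilpotent a) :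
    a = 0 := by
  have hpow : ∀ k : ℕ, a ^ (k + 1) = a := by
    intro k
    induction k with
    | zero => rw [pow_one]
    | succ k ih => rw [pow_succ, ih, ha]
  obtain ⟨m, hm⟩ := hn
  cases m with
  | zero =>
    have h10 : (1 : A) = 0 := by simpa using hm
    calc a = a * 1 := (mul_one a).symm
    _ = a * 0 := by rw [h10]
    _ = 0 := mul_zero a
  | succ k => rw [← hpow k, hm]

/-- For `w` in the Jacobson radical, `1 + w` is a unit. -/
lemma unit_one_add_of_jac {w : A} (hw : w ∈ (⊥ : Ideal A).jacobson) : IsUnit (1 + w) := by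
  obtain ⟨z, hz⟩ := Ideal.mem_jacobson_iff.mp hw 1
  rw [Ideal.mem_bot] at hz
  have hz1 : z * (1 + w) = 1 := by
    have h := sub_eq_zero.mp hz
    calc z * (1 + w) = z * 1 * w + z := by noncomm_ring
    _ = 1 := h
  have hzJ : z - 1 ∈ (⊥ : Ideal A).jacobson := by
    have h : z - 1 = -(z * w) := by
      have : z + z * w = 1 := by rw [← hz1]; noncomm_ring
      rw [← this]; noncomm_ring
    rw [h]
    exact neg_mem (Ideal.mul_mem_left _ z hw)
  obtain ⟨u, hu⟩ := Ideal.mem_jacobson_iff.mp hzJ 1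
  rw [Ideal.mem_bot] at hu
  have hu1 : u * z = 1 := by
    have h := sub_eq_zero.mp hu
    calc u * z = u * 1 * (z - 1) + u := by noncomm_ring
    _ = 1 := h
  have huw : u = 1 + w := by
    calc u = u * (z * (1 + w)) := by rw [hz1, mul_one]
    _ = u * z * (1 + w) := by rw [mul_assoc]
    _ = 1 + w := by rw [hu1, one_mul]
  exact ⟨⟨1 + w, z, by rw [← huw]; exact hu1, hz1⟩, rfl⟩

/-- Factor a nonzero polynomial over a field as `X^k * q` with `q.coeff 0 ≠ 0`. -/
lemma exists_X_pow_mul {F : Type*} [Field F] (p : Polynomial F) (hp : p ≠ 0) :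
    ∃ (k : ℕ) (q : Polynomial F), p = Polynomial.X ^ k * q ∧ q.coeff 0 ≠ 0 := by
  suffices H : ∀ (n : ℕ) (p : Polynomial F), p.natDegree = n → p ≠ 0 →
      ∃ (k : ℕ) (q : Polynomial F), p = Polynomial.X ^ k * q ∧ q.coeff 0 ≠ 0 from
    H _ p rfl hp
  intro n
  induction n using Nat.strong_induction_on with
  | _ n IH =>
  intro p hd hp
  subst hd
  by_cases h0 : p.coeff 0 ≠ 0
  · exact ⟨0, p, by simp, h0⟩
  · push_neg at h0
    have hdiv : p = Polynomial.X * p.divX := by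
      conv_lhs => rw [← Polynomial.X_mul_divX_add p]
      rw [h0, map_zero, add_zero]
    have hne : p.divX ≠ 0 := by
      intro h
      exact hp (by rw [hdiv, h, mul_zero])
    have hlt : p.divX.natDegree < p.natDegree :=
      Polynomial.natDegree_lt_natDegree hne (Polynomial.degree_divX_lt hp)
    obtain ⟨k, q, h1, h2⟩ := IH _ hlt p.divX rfl hne
    exact ⟨k + 1, q, by rw [hdiv, h1]; ring, h2⟩

/-- Every element of the Jacobson radical of a finite-dimensional algebra is nilpotent
(provided the radical is closed under right multiplication). -/
lemma nilpotent_of_mem_jac {F : Type*} {A : Type*} [Field F] [Ring A] [Algebra F A]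
    [FiniteDimensional F A]
    (hJr : ∀ x ∈ (⊥ : Ideal A).jacobson, ∀ a : A, x * a ∈ (⊥ : Ideal A).jacobson)
    {j : A} (hj : j ∈ (⊥ : Ideal A).jacobson) : IsNilpotent j := by
  have hint : IsIntegral F j := IsIntegral.of_finite F j
  have hp0 : minpoly F j ≠ 0 := minpoly.ne_zero hint
  obtain ⟨k, q, hpq, hq0⟩ := exists_X_pow_mul (minpoly F j) hp0
  have heval : j ^ k * Polynomial.aeval j q = 0 := by
    have h := minpoly.aeval F j
    rw [hpq] at h
    simpa [map_mul, map_pow] using h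
  have hq : Polynomial.aeval j q =
      j * Polynomial.aeval j q.divX + algebraMap F A (q.coeff 0) := by
    conv_lhs => rw [← Polynomial.X_mul_divX_add q]
    rw [map_add, map_mul, Polynomial.aeval_X, Polynomial.aeval_C]
  have hcu : IsUnit (algebraMap F A (q.coeff 0)) :=
    (hq0.isUnit).map (algebraMap F A)
  have key : Polynomial.aeval j q =
      algebraMap F A (q.coeff 0) *
        (1 + algebraMap F A (q.coeff 0)⁻¹ * (j * Polynomial.aeval j q.divX)) := by
    rw [mul_add, mul_one, ← mul_assoc, ← map_mul, mul_inv_cancel₀ hq0, map_one, one_mul,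
      hq, add_comm]
  have hJmem : algebraMap F A (q.coeff 0)⁻¹ * (j * Polynomial.aeval j q.divX) ∈
      (⊥ : Ideal A).jacobson :=
    Ideal.mul_mem_left _ _ (hJr j hj _)
  have hunit : IsUnit (Polynomial.aeval j q) := by
    rw [key]
    exact hcu.mul (unit_one_add_of_jac hJmem)
  obtain ⟨u, hu⟩ := hunit
  refine ⟨k, ?_⟩
  calc j ^ k = j ^ k * ↑u * ↑u⁻¹ := by rw [mul_assoc, u.mul_inv, mul_one]
  _ = 0 := by rw [hu, heval, zero_mul]

/-- Idempotent lifting: if `(q*q - q)^n = 0` then there is an idempotent `e = q + (q*q-q)*c`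
lying in the non-unital subring generated by `q`. -/
lemma lift_aux : ∀ (n : ℕ) (q : A), (q * q - q) ^ n = 0 →
    ∃ e c : A, e = q + (q * q - q) * c ∧ IsIdempotentElem e ∧
      e ∈ NonUnitalSubring.closure {q} := by
  intro n
  induction n using Nat.strong_induction_on with
  | _ n IH =>
  intro q hq
  rcases lt_or_ge n 2 with hn | hn
  · interval_cases n
    · -- trivial ring
      have h10 : (1 : A) = 0 := by simpa using hq
      have hall : ∀ x : A, x = 0 := fun x => by
        calc x = x * 1 := (mul_one x).symm
        _ = x * 0 := by rw [h10]
        _ = 0 := mul_zero x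
      refine ⟨q, 0, by rw [mul_zero, add_zero], ?_, NonUnitalSubring.subset_closure rfl⟩
      show q * q = q
      rw [hall (q * q), hall q]
    · have hd : q * q - q = 0 := by simpa using hq
      exact ⟨q, 0, by rw [mul_zero, add_zero], sub_eq_zero.mp hd,
        NonUnitalSubring.subset_closure rfl⟩
  · -- main step of Newton-type iteration
    have hqmem : q ∈ NonUnitalSubring.closure ({q} : Set A) :=
      NonUnitalSubring.subset_closure rfl
    have hdmem : q * q - q ∈ NonUnitalSubring.closure ({q} : Set A) :=
      sub_mem (mul_mem hqmem hqmem) hqmem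
    have hq'mem : q + ((q * q - q) - ((q * q - q) * q + (q * q - q) * q)) ∈
        NonUnitalSubring.closure ({q} : Set A) :=
      add_mem hqmem (sub_mem hdmem (add_mem (mul_mem hdmem hqmem) (mul_mem hdmem hqmem)))
    set q' : A := q + ((q * q - q) - ((q * q - q) * q + (q * q - q) * q)) with hq'def
    have hm : (n + 1) / 2 < n := by omega
    have hiden : q' * q' - q' =
        ((q * q - q) * (q * q - q)) *
          ((q * q - q) + (q * q - q) + (q * q - q) + (q * q - q) - 3) := by
      rw [hq'def]; noncomm_ring
    have hcomm : Commute ((q * q - q) * (q * q - q))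
        ((q * q - q) + (q * q - q) + (q * q - q) + (q * q - q) - (3 : A)) := by
      show _ * _ = _ * _
      noncomm_ring
    have hpow : (q' * q' - q') ^ ((n + 1) / 2) = 0 := by
      rw [hiden, hcomm.mul_pow]
      have h2m : ((q * q - q) * (q * q - q)) ^ ((n + 1) / 2) = 0 := by
        have hrw : ((q * q - q) * (q * q - q)) ^ ((n + 1) / 2) =
            (q * q - q) ^ n * (q * q - q) ^ (2 * ((n + 1) / 2) - n) := by
          rw [← pow_two, ← pow_mul, ← pow_add]
          congr 1
          omega
        rw [hrw, hq, zero_mul]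
      rw [h2m, zero_mul]
    obtain ⟨e, c', hec', he, hmem'⟩ := IH _ hm q' hpow
    have hsub : NonUnitalSubring.closure ({q'} : Set A) ≤
        NonUnitalSubring.closure ({q} : Set A) :=
      NonUnitalSubring.closure_le.mpr (Set.singleton_subset_iff.mpr hq'mem)
    refine ⟨e, (1 - (q + q)) +
      ((q * q - q) * ((q * q - q) + (q * q - q) + (q * q - q) + (q * q - q) - 3)) * c',
      ?_, he, hsub hmem'⟩
    rw [hec', hq'def]
    noncomm_ring

/-- Conjugation by a unit preserves singularity. -/
lemma isSingular_conj (t : Aˣ) {z : A} (h : IsSingular z) :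
    IsSingular ((t : A) * z * ((t⁻¹ : Aˣ) : A)) := by
  obtain ⟨e, he, he1, hez, hze⟩ := h
  refine ⟨(t : A) * e * ((t⁻¹ : Aˣ) : A), ?_, ?_, ?_, ?_⟩
  · show _ * _ = _
    simp only [mul_assoc]
    rw [Units.inv_mul_cancel_left, ← mul_assoc e e, he]
  · intro hcon
    apply he1
    have : e = ((t⁻¹ : Aˣ) : A) * ((t : A) * e * ((t⁻¹ : Aˣ) : A)) * (t : A) := by
      simp only [mul_assoc, Units.inv_mul, mul_one]
      rw [Units.inv_mul_cancel_left]
    rw [this, hcon, mul_one, Units.inv_mul]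
  · simp only [mul_assoc]
    rw [Units.inv_mul_cancel_left, ← mul_assoc e z, hez]
  · simp only [mul_assoc]
    rw [Units.inv_mul_cancel_left, ← mul_assoc z e, hze]

end Aux

/-- The key step: singular elements stay singular along the `G̃`-action. -/
lemma main_step {F A : Type*} [Field F] [Ring A] [Algebra F A] [FiniteDimensional F A]
    (J : Ideal A) (hJ : J = (⊥ : Ideal A).jacobson)
    (hJr : ∀ x ∈ J, ∀ a : A, x * a ∈ J)
    {x : A} (hx : IsSingular x) (t : Aˣ) (a b : A) (ha : a - 1 ∈ J) (hb : b - 1 ∈ J) :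
    IsSingular ((t : A) * a * x * b * ((t⁻¹ : Aˣ) : A)) := by
  subst hJ
  obtain ⟨e, he, he1, hex, hxe⟩ := hx
  -- units a, b
  obtain ⟨ua, hua⟩ : ∃ u : Aˣ, (u : A) = a := by
    have h := unit_one_add_of_jac ha
    rw [add_comm, sub_add_cancel] at h
    exact ⟨h.unit, h.unit_spec⟩
  obtain ⟨ub, hub⟩ : ∃ u : Aˣ, (u : A) = b := by
    have h := unit_one_add_of_jac hb
    rw [add_comm, sub_add_cancel] at h
    exact ⟨h.unit, h.unit_spec⟩
  have hia : ((ua⁻¹ : Aˣ) : A) * a = 1 := by rw [← hua, Units.inv_mul]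
  have hai : a * ((ua⁻¹ : Aˣ) : A) = 1 := by rw [← hua, Units.mul_inv]
  have hib : ((ub⁻¹ : Aˣ) : A) * b = 1 := by rw [← hub, Units.inv_mul]
  have hbi : b * ((ub⁻¹ : Aˣ) : A) = 1 := by rw [← hub, Units.mul_inv]
  set f : A := a * e * ((ua⁻¹ : Aˣ) : A) with hfdef
  set g : A := ((ub⁻¹ : Aˣ) : A) * e * b with hgdef
  set z : A := a * x * b with hzdef
  have hfz : f * z = z := by
    rw [hfdef, hzdef]
    simp only [mul_assoc]
    rw [← mul_assoc ((ua⁻¹ : Aˣ) : A) a, hia, one_mul, ← mul_assoc e x, hex]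
  have hzg : z * g = z := by
    rw [hgdef, hzdef]
    simp only [mul_assoc]
    rw [← mul_assoc b ((ub⁻¹ : Aˣ) : A), hbi, one_mul, ← mul_assoc x e, hxe]
  have hf : IsIdempotentElem f := by
    show f * f = f
    rw [hfdef]
    simp only [mul_assoc]
    rw [← mul_assoc ((ua⁻¹ : Aˣ) : A) a, hia, one_mul, ← mul_assoc e e, he]
  have hg : IsIdempotentElem g := by
    show g * g = g
    rw [hgdef]
    simp only [mul_assoc]
    rw [← mul_assoc b ((ub⁻¹ : Aˣ) : A), hbi, one_mul, ← mul_assoc e e, he]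
  have hfe : f - e ∈ (⊥ : Ideal A).jacobson := by
    have h1 : f - e = (a * e - e * a) * ((ua⁻¹ : Aˣ) : A) := by
      rw [hfdef, sub_mul, mul_assoc e a, hai, mul_one]
    have h2 : a * e - e * a = (a - 1) * e - e * (a - 1) := by noncomm_ring
    rw [h1]
    exact hJr _ (by rw [h2]; exact sub_mem (hJr _ ha e) (Ideal.mul_mem_left _ e ha)) _
  have hge : g - e ∈ (⊥ : Ideal A).jacobson := by
    have h1 : g - e = ((ub⁻¹ : Aˣ) : A) * (e * b - b * e) := by
      rw [hgdef, mul_sub, ← mul_assoc ((ub⁻¹ : Aˣ) : A) b, hib, one_mul, mul_assoc]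
    have h2 : e * b - b * e = e * (b - 1) - (b - 1) * e := by noncomm_ring
    rw [h1]
    exact Ideal.mul_mem_left _ _
      (by rw [h2]; exact sub_mem (Ideal.mul_mem_left _ e hb) (hJr _ hb e))
  -- the corner idempotent
  set p : A := (1 - g) * (1 - f) with hpdef
  have hp1e : p - (1 - e) ∈ (⊥ : Ideal A).jacobson := by
    have h1 : p - (1 - e) =
        -((g - e) * (1 - f)) - (1 - e) * (f - e) + (e * e - e) := by
      rw [hpdef]; noncomm_ring
    rw [h1, he, sub_self, add_zero]
    exact sub_mem (neg_mem (hJr _ hge _)) (Ideal.mul_mem_left _ _ hfe)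
  have hdJ : p * p - p ∈ (⊥ : Ideal A).jacobson := by
    have h1 : p * p - p =
        (1 - e) * (p - (1 - e)) + (p - (1 - e)) * (1 - e) +
          (p - (1 - e)) * (p - (1 - e)) - (p - (1 - e)) + (e * e - e) := by
      noncomm_ring
    rw [h1, he, sub_self, add_zero]
    exact sub_mem (add_mem (add_mem (Ideal.mul_mem_left _ _ hp1e) (hJr _ hp1e _))
      (hJr _ hp1e _)) hp1e
  obtain ⟨n, hdn⟩ := nilpotent_of_mem_jac (F := F) hJr hdJ
  obtain ⟨e', c, hec, he', hmem'⟩ := lift_aux n p hdn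
  have he'J : e' - (1 - e) ∈ (⊥ : Ideal A).jacobson := by
    have h1 : e' - (1 - e) = (p * p - p) * c + (p - (1 - e)) := by
      rw [hec]; noncomm_ring
    rw [h1]
    exact add_mem (hJr _ hdJ c) hp1e
  have hr : IsIdempotentElem (1 - g) := hg.one_sub
  have hs : IsIdempotentElem (1 - f) := hf.one_sub
  have hcorner : (1 - g) * e' = e' ∧ e' * (1 - f) = e' := by
    refine NonUnitalSubring.closure_induction
      (p := fun x _ => (1 - g) * x = x ∧ x * (1 - f) = x) ?_ ?_ ?_ ?_ ?_ hmem'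
    · rintro y rfl
      constructor
      · rw [hpdef, ← mul_assoc, hr]
      · rw [hpdef, mul_assoc, hs]
    · simp
    · rintro y y' _ _ ⟨h1, h2⟩ ⟨h3, h4⟩
      constructor
      · rw [mul_add, h1, h3]
      · rw [add_mul, h2, h4]
    · rintro y _ ⟨h1, h2⟩
      constructor
      · rw [mul_neg, h1]
      · rw [neg_mul, h2]
    · rintro y y' _ _ ⟨h1, h2⟩ ⟨h3, h4⟩
      constructor
      · rw [← mul_assoc, h1]
      · rw [mul_assoc, h4]
  have he'0 : e' ≠ 0 := by
    intro h0
    apply he1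
    have h1e : (1 : A) - e ∈ (⊥ : Ideal A).jacobson := by
      have := neg_mem he'J
      rw [h0, zero_sub, neg_neg] at this
      exact this
    have := idem_nilpotent_eq_zero he.one_sub (nilpotent_of_mem_jac (F := F) hJr h1e)
    have h := sub_eq_zero.mp this
    exact h.symm
  -- the idempotent fixing z
  have hkz : (1 - e') * z = z := by
    have hsz : (1 - f) * z = 0 := by rw [sub_mul, one_mul, hfz, sub_self]
    have he'z : e' * z = 0 := by
      rw [← hcorner.2, mul_assoc, hsz, mul_zero]
    rw [sub_mul, one_mul, he'z, sub_zero]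
  have hzk : z * (1 - e') = z := by
    have hzr : z * (1 - g) = 0 := by rw [mul_sub, mul_one, hzg, sub_self]
    have hze' : z * e' = 0 := by
      rw [← hcorner.1, ← mul_assoc, hzr, zero_mul]
    rw [mul_sub, mul_one, hze', sub_zero]
  have hzsing : IsSingular z := by
    refine ⟨1 - e', he'.one_sub, ?_, hkz, hzk⟩
    intro hcon
    exact he'0 (by rwa [sub_eq_self] at hcon)
  have hform : (t : A) * a * x * b * ((t⁻¹ : Aˣ) : A) = (t : A) * z * ((t⁻¹ : Aˣ) : A) := by
    rw [hzdef]; simp only [mul_assoc]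
  rw [hform]
  exact isSingular_conj t hzsing

/-- The reverse direction: singularity descends along the `G̃`-action. -/
lemma main_step_rev {F A : Type*} [Field F] [Ring A] [Algebra F A] [FiniteDimensional F A]
    (J : Ideal A) (hJ : J = (⊥ : Ideal A).jacobson)
    (hJr : ∀ x ∈ J, ∀ a : A, x * a ∈ J)
    {x y : A} (t : Aˣ) (a b : A) (ha : a - 1 ∈ J) (hb : b - 1 ∈ J)
    (hy : y = (t : A) * a * x * b * ((t⁻¹ : Aˣ) : A))
    (hsy : IsSingular y) : IsSingular x := by
  subst hJ
  obtain ⟨ua, hua⟩ : ∃ u : Aˣ, (u : A) = a := by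
    have h := unit_one_add_of_jac ha
    rw [add_comm, sub_add_cancel] at h
    exact ⟨h.unit, h.unit_spec⟩
  obtain ⟨ub, hub⟩ : ∃ u : Aˣ, (u : A) = b := by
    have h := unit_one_add_of_jac hb
    rw [add_comm, sub_add_cancel] at h
    exact ⟨h.unit, h.unit_spec⟩
  have ha' : ((ua⁻¹ : Aˣ) : A) - 1 ∈ (⊥ : Ideal A).jacobson := by
    have h : ((ua⁻¹ : Aˣ) : A) - 1 = -(((ua⁻¹ : Aˣ) : A) * (a - 1)) := by
      rw [mul_sub, mul_one, ← hua, Units.inv_mul, neg_sub]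
    rw [h]
    exact neg_mem (Ideal.mul_mem_left _ _ ha)
  have hb' : ((ub⁻¹ : Aˣ) : A) - 1 ∈ (⊥ : Ideal A).jacobson := by
    have h : ((ub⁻¹ : Aˣ) : A) - 1 = -(((ub⁻¹ : Aˣ) : A) * (b - 1)) := by
      rw [mul_sub, mul_one, ← hub, Units.inv_mul, neg_sub]
    rw [h]
    exact neg_mem (Ideal.mul_mem_left _ _ hb)
  have ha'' : (t : A) * ((ua⁻¹ : Aˣ) : A) * ((t⁻¹ : Aˣ) : A) - 1 ∈ (⊥ : Ideal A).jacobson := by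
    have h : (t : A) * ((ua⁻¹ : Aˣ) : A) * ((t⁻¹ : Aˣ) : A) - 1 =
        (t : A) * (((ua⁻¹ : Aˣ) : A) - 1) * ((t⁻¹ : Aˣ) : A) := by
      rw [mul_sub, mul_one, sub_mul, Units.mul_inv]
    rw [h]
    exact hJr _ (Ideal.mul_mem_left _ _ ha') _
  have hb'' : (t : A) * ((ub⁻¹ : Aˣ) : A) * ((t⁻¹ : Aˣ) : A) - 1 ∈ (⊥ : Ideal A).jacobson := by
    have h : (t : A) * ((ub⁻¹ : Aˣ) : A) * ((t⁻¹ : Aˣ) : A) - 1 =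
        (t : A) * (((ub⁻¹ : Aˣ) : A) - 1) * ((t⁻¹ : Aˣ) : A) := by
      rw [mul_sub, mul_one, sub_mul, Units.mul_inv]
    rw [h]
    exact hJr _ (Ideal.mul_mem_left _ _ hb') _
  have hx' : x = ((t⁻¹ : Aˣ) : A) * ((t : A) * ((ua⁻¹ : Aˣ) : A) * ((t⁻¹ : Aˣ) : A)) * y *
      ((t : A) * ((ub⁻¹ : Aˣ) : A) * ((t⁻¹ : Aˣ) : A)) * (((t⁻¹)⁻¹ : Aˣ) : A) := by
    rw [hy, ← hua, ← hub, inv_inv]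
    simp only [mul_assoc, Units.inv_mul_cancel_left, Units.mul_inv_cancel_left,
      Units.inv_mul, Units.mul_inv, mul_one, one_mul]
  rw [hx']
  exact main_step (F := F) _ rfl hJr hsy t⁻¹ _ _ ha'' hb''

/-- Proposition 2.3 (for `J`): if `x ∈ J` is singular then so is every element
`t * a * x * b * t⁻¹` of its `G̃`-orbit; consequently, along the `G̃`-orbit relation
singular elements go to singular elements and regular elements go to regular elements. -/
theorem orbit_preserves_singular_and_regular
    {F A : Type*} [Field F] [Fintype F] [Ring A] [Algebra F A] [FiniteDimensional F A]
    (J : Ideal A) (hJ : J = (⊥ : Ideal A).jacobson)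
    (hJr : ∀ x ∈ J, ∀ a : A, x * a ∈ J)
    (hred : ∀ a b : A, a * b - b * a ∈ J)
    (S : Subalgebra F A)
    (hS : IsCompl (Subalgebra.toSubmodule S) (Submodule.restrictScalars F J)) :
    (∀ x ∈ J, IsSingular x →
      ∀ t : Aˣ, (t : A) ∈ S → ((t⁻¹ : Aˣ) : A) ∈ S →
        ∀ a b : A, a - 1 ∈ J → b - 1 ∈ J →
          IsSingular ((t : A) * a * x * b * ((t⁻¹ : Aˣ) : A))) ∧
    (∀ x y : A, x ∈ J → SameOrbitJ J S x y →
      (IsSingular x → IsSingular y) ∧ (¬ IsSingular x → ¬ IsSingular y)) := by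
  constructor
  · intro x _ hx t _ _ a b ha hb
    exact main_step (F := F) J hJ hJr hx t a b ha hb
  · intro x y _ horb
    obtain ⟨t, -, -, a, b, ha, hb, hy⟩ := horb
    constructor
    · intro hx
      rw [hy]
      exact main_step (F := F) J hJ hJr hx t a b ha hb
    · intro hx hsy
      exact hx (main_step_rev (F := F) J hJ hJr t a b ha hb hy hsy)
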